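/- Let A be a unital complex *-algebra containing operators T_i, T_i^*, T_i′ (i ∈ ℕ) satisfying the commutation condition (C4) with real coefficients Q_{ε,ε′}(i,j). Let π_f ∈ P^B_{2,ε}(2n) have blocks {z_1,w_1},…,{z_n,w_n} with z_j < w_j and w_1 < ⋯ < w_n, and let i ∈ ℕ^{2n} be a tuple with ker i = π. Then T_{i(1)}^{ε(1)} ⋯ T_{i(2n)}^{ε(2n)} = Ξ(π_f,i) · (T_{i(z_1)}^* T_{i(w_1)}^{ε(w_1)}) ⋯ (T_{i(z_n)}^* T_{i(w_n)}^{ε(w_n)}). -/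

import Mathlib

open Filter
open scoped BigOperators Classical

/-- The three kinds of labels `1, ∗, ′` for the operators. -/
inductive Eps : Type
  | one
  | star
  | prime
  deriving DecidableEq

/-- `Teps T T' ε i` is the operator `T_i^ε`. -/
def Teps {A : Type*} [Ring A] [StarRing A] (T T' : ℕ → A) : Eps → ℕ → A
  | Eps.one, i => T i
  | Eps.star, i => star (T i)
  | Eps.prime, i => T' i

/-- The ordered product `T_{i(1)}^{ε(1)} ⋯ T_{i(r)}^{ε(r)}`. -/
def prodT {A : Type*} [Ring A] [StarRing A] (T T' : ℕ → A) {r : ℕ}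
    (ε : Fin r → Eps) (i : Fin r → ℕ) : A :=
  (List.ofFn fun j => Teps T T' (ε j) (i j)).prod

/-- `ker i = π` for a set partition `π` of `[r]`, encoded as a setoid on `Fin r`. -/
def kerEq {r : ℕ} (i : Fin r → ℕ) (π : Setoid (Fin r)) : Prop :=
  ∀ k l, i k = i l ↔ π.r k l

/-- Condition (C1): vanishing means and vanishing of all second mixed moments except
`φ(T_i^* T_i)` and `φ(T_i^* T_i′)`. -/
def C1 {A : Type*} [Ring A] [Algebra ℂ A] [StarRing A]
    (φ : A →ₗ[ℂ] ℂ) (T T' : ℕ → A) : Prop :=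
  (∀ (i : ℕ) (e : Eps), φ (Teps T T' e i) = 0) ∧
  (∀ (i : ℕ) (e e' : Eps), ¬ (e = Eps.star ∧ (e' = Eps.one ∨ e' = Eps.prime)) →
    φ (Teps T T' e i * Teps T T' e' i) = 0)

/-- Condition (C2): uniform bounds for moments with a fixed kernel. -/
def C2 {A : Type*} [Ring A] [Algebra ℂ A] [StarRing A]
    (φ : A →ₗ[ℂ] ℂ) (T T' : ℕ → A) : Prop :=
  ∀ (r : ℕ) (π : Setoid (Fin r)), ∃ ρ : ℝ, 0 ≤ ρ ∧
    ∀ (ε : Fin r → Eps) (i : Fin r → ℕ), kerEq i π →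
      ‖φ (prodT T T' ε i)‖ ≤ ρ

/-- Condition (C3): the state factors over interval partitions.  A word whose kernel is an
interval partition is presented as a concatenation of groups, each group having a constant
index, different groups having distinct indices. -/
def C3 {A : Type*} [Ring A] [Algebra ℂ A] [StarRing A]
    (φ : A →ₗ[ℂ] ℂ) (T T' : ℕ → A) : Prop :=
  ∀ G : List (List (Eps × ℕ)),
    (∀ g ∈ G, g ≠ [] ∧ ∃ m, ∀ x ∈ g, Prod.snd x = m) →
    (G.Pairwise fun g₁ g₂ => ∀ x₁ ∈ g₁, ∀ x₂ ∈ g₂, Prod.snd x₁ ≠ Prod.snd x₂) →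
    φ ((G.flatten.map fun x => Teps T T' x.1 x.2).prod) =
      (G.map fun g => φ ((g.map fun x => Teps T T' x.1 x.2).prod)).prod

/-- Condition (C4): commutation relations `T_i^ε T_j^{ε'} = Q_{ε,ε'}(i,j) T_j^{ε'} T_i^ε`
for `i ≠ j`. -/
def C4 {A : Type*} [Ring A] [Algebra ℂ A] [StarRing A]
    (T T' : ℕ → A) (Q : Eps → Eps → ℕ → ℕ → ℝ) : Prop :=
  ∀ (i j : ℕ), i ≠ j → ∀ (e e' : Eps),
    Teps T T' e i * Teps T T' e' j = (Q e e' i j : ℂ) • (Teps T T' e' j * Teps T T' e i)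

/-- A pair partition of `[m]`, encoded as a fixed-point-free involution `p`:
the blocks are the sets `{x, p x}`. -/
def IsPairing {m : ℕ} (p : Fin m → Fin m) : Prop :=
  ∀ x, p (p x) = x ∧ p x ≠ x

/-- A coloring `f : π → {±1}` of the blocks (encoded pointwise, constant on blocks;
`true` stands for the color `1`, `false` for the color `-1`). -/
def IsColoring {m : ℕ} (p : Fin m → Fin m) (f : Fin m → Bool) : Prop :=
  ∀ x, f (p x) = f x

/-- Membership of a colored pair partition in `P^B_{2,ε}`: on each block `{z, w}` with
`z < w` one has `ε(z) = ∗` and `ε(w) = 1` resp. `′` according to the color. -/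
def EpsCompat {m : ℕ} (ε : Fin m → Eps) (p : Fin m → Fin m) (f : Fin m → Bool) : Prop :=
  ∀ x, x < p x → ε x = Eps.star ∧ ε (p x) = (if f x then Eps.one else Eps.prime)

/-- `ker i = π` for the pair partition encoded by the involution `p`. -/
def kerPair {m : ℕ} (i : Fin m → ℕ) (p : Fin m → Fin m) : Prop :=
  ∀ k l, i k = i l ↔ (k = l ∨ p k = l)

/-- The coefficient `Ξ(π_f, i)`: a product of commutation coefficients over crossing pairs
of blocks and over nesting pairs of blocks.  Here `a, b` run over left legs of blocks. -/
noncomputable def Xi (Q : Eps → Eps → ℕ → ℕ → ℝ) {m : ℕ}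
    (p : Fin m → Fin m) (f : Fin m → Bool) (i : Fin m → ℕ) : ℝ :=
  (∏ a : Fin m, ∏ b : Fin m,
    if a < p a ∧ b < p b ∧ a < b ∧ b < p a ∧ p a < p b then
      Q Eps.star (if f a then Eps.one else Eps.prime) (i b) (i (p a)) else 1) *
  (∏ a : Fin m, ∏ b : Fin m,
    if a < p a ∧ b < p b ∧ a < b ∧ p b < p a then
      Q Eps.star Eps.star (i a) (i b) *
        Q Eps.star (if f b then Eps.one else Eps.prime) (i a) (i (p b)) else 1)

/-- The quantity whose limit (as `N → ∞`) is `λ_{π_f}` in condition (C5):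
`N^{-n} ∑_{i ∈ [N]^{2n}, ker i = π} Ξ(π_f,i) ∏_{f=1} φ(T^*T) ∏_{f=-1} φ(T^*T')`. -/
noncomputable def Ysum {A : Type*} [Ring A] [Algebra ℂ A] [StarRing A]
    (φ : A →ₗ[ℂ] ℂ) (T T' : ℕ → A) (Q : Eps → Eps → ℕ → ℕ → ℝ)
    (n N : ℕ) (p : Fin (2 * n) → Fin (2 * n)) (f : Fin (2 * n) → Bool) : ℂ :=
  ((N : ℂ) ^ n)⁻¹ *
    ∑ i ∈ (Fintype.piFinset fun _ : Fin (2 * n) => Finset.Icc 1 N).filter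
        (fun i => kerPair i p),
      ((Xi Q p f i : ℝ) : ℂ) *
        (∏ a : Fin (2 * n),
          if a < p a ∧ f a = true then φ (star (T (i a)) * T (i (p a))) else 1) *
        (∏ a : Fin (2 * n),
          if a < p a ∧ f a = false then φ (star (T (i a)) * T' (i (p a))) else 1)

/-- The normalized sum `S_N^ε = (T_1^ε + ⋯ + T_N^ε)/√N`. -/
noncomputable def SN {A : Type*} [Ring A] [Algebra ℂ A] [StarRing A]
    (T T' : ℕ → A) (e : Eps) (N : ℕ) : A :=
  ((Real.sqrt N : ℂ))⁻¹ • ∑ k ∈ Finset.Icc 1 N, Teps T T' e k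


section ReorderAux

variable {A : Type*} [Ring A] [Algebra ℂ A] {α : Type*}

/-- coefficient accumulated when insertion-sorting a word by `key`. -/
private def cLcoef (q : α → α → ℂ) (key : α → ℕ) : List α → ℂ
  | [] => 1
  | a :: t => (t.map fun b => if key b < key a then q a b else 1).prod * cLcoef q key t

private lemma insert_step (x : α → A) (q : α → α → ℂ) (key : α → ℕ) (a : α) :
    ∀ S : List α, S.Pairwise (fun u v => key u ≤ key v) →
      (∀ b ∈ S, key b < key a → x a * x b = q a b • (x b * x a)) →
      x a * (S.map x).prod =
        (S.map fun b => if key b < key a then q a b else 1).prod •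
          ((List.orderedInsert (fun u v => key u ≤ key v) a S).map x).prod
  | [], _, _ => by simp
  | b :: S, hS, hsw => by
    rcases List.pairwise_cons.mp hS with ⟨hb, hS'⟩
    by_cases h : key a ≤ key b
    · rw [List.orderedInsert, if_pos h]
      have h1 : ((b :: S).map fun c => if key c < key a then q a c else 1).prod = 1 := by
        apply List.prod_eq_one
        intro u hu
        rcases List.mem_map.mp hu with ⟨c, hc, rfl⟩
        have : key a ≤ key c := by
          rcases List.mem_cons.mp hc with rfl | hc'
          · exact h
          · exact h.trans (hb c hc')
        rw [if_neg (not_lt.mpr this)]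
      rw [h1, one_smul]
      simp [List.map_cons, List.prod_cons]
    · have hlt : key b < key a := not_le.mp h
      rw [List.orderedInsert, if_neg h]
      have IH := insert_step x q key a S hS' (fun c hc => hsw c (List.mem_cons_of_mem _ hc))
      calc x a * ((b :: S).map x).prod
          = (x a * x b) * (S.map x).prod := by rw [List.map_cons, List.prod_cons, mul_assoc]
        _ = (q a b • (x b * x a)) * (S.map x).prod := by
            rw [hsw b (List.mem_cons_self) hlt]
        _ = q a b • (x b * (x a * (S.map x).prod)) := by
            rw [smul_mul_assoc, mul_assoc]
        _ = q a b • (x b *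
              ((S.map fun c => if key c < key a then q a c else 1).prod •
                ((List.orderedInsert (fun u v => key u ≤ key v) a S).map x).prod)) := by
            rw [IH]
        _ = ((b :: S).map fun c => if key c < key a then q a c else 1).prod •
              ((b :: List.orderedInsert (fun u v => key u ≤ key v) a S).map x).prod := by
            rw [List.map_cons, List.prod_cons, if_pos hlt, List.map_cons, List.prod_cons,
              mul_smul_comm, smul_smul]

private lemma sort_step (x : α → A) (q : α → α → ℂ) (key : α → ℕ) :
    ∀ L : List α,
      L.Pairwise (fun u v => key v < key u → x u * x v = q u v • (x v * x u)) →
      (L.map x).prod = cLcoef q key L •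
        ((L.insertionSort (fun u v => key u ≤ key v)).map x).prod
  | [], _ => by simp [cLcoef]
  | a :: t, hpw => by
    haveI : IsTotal α (fun u v => key u ≤ key v) := ⟨fun u v => le_total _ _⟩
    haveI : IsTrans α (fun u v => key u ≤ key v) := ⟨fun u v w h1 h2 => h1.trans h2⟩
    rcases List.pairwise_cons.mp hpw with ⟨h1, h2⟩
    have IH := sort_step x q key t h2
    have hsorted := List.pairwise_insertionSort (fun u v => key u ≤ key v) t
    have hmem : ∀ b ∈ t.insertionSort (fun u v => key u ≤ key v), b ∈ t := by
      intro b hb; exact (List.perm_insertionSort _ t).mem_iff.mp hb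
    have hins := insert_step x q key a (t.insertionSort (fun u v => key u ≤ key v))
      hsorted (fun b hb => h1 b (hmem b hb))
    have hperm : ((t.insertionSort (fun u v => key u ≤ key v)).map
        fun b => if key b < key a then q a b else 1).prod =
        (t.map fun b => if key b < key a then q a b else 1).prod :=
      ((List.perm_insertionSort _ t).map _).prod_eq
    calc ((a :: t).map x).prod = x a * (t.map x).prod := by
          rw [List.map_cons, List.prod_cons]
      _ = x a * (cLcoef q key t •
            ((t.insertionSort (fun u v => key u ≤ key v)).map x).prod) := by rw [IH]
      _ = cLcoef q key t •
            (x a * ((t.insertionSort (fun u v => key u ≤ key v)).map x).prod) := by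
          rw [mul_smul_comm]
      _ = cLcoef q key (a :: t) •
            (((a :: t).insertionSort (fun u v => key u ≤ key v)).map x).prod := by
          rw [hins, hperm, smul_smul, List.insertionSort_cons]
          rw [cLcoef, mul_comm]

private lemma cLcoef_eq_prod {β : Type*} [LinearOrder β] [Fintype β] [DecidableEq β]
    (q : β → β → ℂ) (key : β → ℕ) :
    ∀ t : List β, t.Pairwise (· < ·) →
      cLcoef q key t = ∏ a : β, ∏ b : β,
        if a ∈ t ∧ b ∈ t ∧ a < b ∧ key b < key a then q a b else 1
  | [], _ => by simp [cLcoef]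
  | a₀ :: t, ht => by
    rcases List.pairwise_cons.mp ht with ⟨ha₀, ht'⟩
    have hnotmem : a₀ ∉ t := fun h => lt_irrefl a₀ (ha₀ a₀ h)
    have hnodup : t.Nodup := ht'.nodup
    have IH := cLcoef_eq_prod q key t ht'
    set F : β → ℂ := fun a => ∏ b : β,
      if a ∈ a₀ :: t ∧ b ∈ a₀ :: t ∧ a < b ∧ key b < key a then q a b else 1 with hF
    set G : β → ℂ := fun a => ∏ b : β,
      if a ∈ t ∧ b ∈ t ∧ a < b ∧ key b < key a then q a b else 1 with hG
    have hFa₀ : F a₀ = (t.map fun b => if key b < key a₀ then q a₀ b else 1).prod := by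
      have step1 : F a₀ = ∏ b : β, if b ∈ t.toFinset
          then (if key b < key a₀ then q a₀ b else 1) else 1 := by
        rw [hF]
        refine Finset.prod_congr rfl fun b _ => ?_
        by_cases hb : b ∈ t
        · by_cases hk : key b < key a₀
          · rw [if_pos ⟨List.mem_cons_self, List.mem_cons_of_mem _ hb, ha₀ b hb, hk⟩,
              if_pos (List.mem_toFinset.mpr hb), if_pos hk]
          · rw [if_neg (fun h => hk h.2.2.2), if_pos (List.mem_toFinset.mpr hb), if_neg hk]
        · rw [if_neg (fun h => hb (List.mem_toFinset.mp h)), if_neg]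
          rintro ⟨-, hb', hab, -⟩
          rcases List.mem_cons.mp hb' with rfl | h
          · exact lt_irrefl _ hab
          · exact hb h
      rw [step1, Finset.prod_ite_mem, Finset.univ_inter, List.prod_toFinset _ hnodup]
    have hGa₀ : G a₀ = 1 := by
      rw [hG]
      refine Finset.prod_eq_one fun b _ => if_neg ?_
      rintro ⟨h, -⟩; exact hnotmem h
    have hFG : ∀ a ∈ Finset.univ.erase a₀, F a = G a := by
      intro a ha
      have hne : a ≠ a₀ := (Finset.mem_erase.mp ha).1
      rw [hF, hG]
      refine Finset.prod_congr rfl fun b _ => ?_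
      refine if_congr ?_ rfl rfl
      constructor
      · rintro ⟨h1, h2, h3, h4⟩
        have h1' : a ∈ t := (List.mem_cons.mp h1).resolve_left hne
        refine ⟨h1', ?_, h3, h4⟩
        rcases List.mem_cons.mp h2 with rfl | h
        · exact absurd (lt_trans (ha₀ a h1') h3) (lt_irrefl _)
        · exact h
      · rintro ⟨h1, h2, h3, h4⟩
        exact ⟨List.mem_cons_of_mem _ h1, List.mem_cons_of_mem _ h2, h3, h4⟩
    calc cLcoef q key (a₀ :: t)
        = (t.map fun b => if key b < key a₀ then q a₀ b else 1).prod * cLcoef q key t := rfl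
      _ = F a₀ * ∏ a ∈ Finset.univ.erase a₀, F a := by
          rw [hFa₀, IH]
          congr 1
          calc Finset.univ.prod G
              = G a₀ * ∏ a ∈ Finset.univ.erase a₀, G a :=
                (Finset.mul_prod_erase Finset.univ G (Finset.mem_univ a₀)).symm
            _ = ∏ a ∈ Finset.univ.erase a₀, F a := by
                rw [hGa₀, one_mul]; exact (Finset.prod_congr rfl hFG).symm
      _ = ∏ a : β, F a := Finset.mul_prod_erase Finset.univ F (Finset.mem_univ a₀)

end ReorderAux

/-- under the commutation condition (C4), for `π_f ∈ P^B_{2,ε}(2n)` and a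
tuple `i` with `ker i = π`, the word `T_{i(1)}^{ε(1)} ⋯ T_{i(2n)}^{ε(2n)}` equals
`Ξ(π_f,i)` times the product `(T_{i(z_1)}^* T_{i(w_1)}^{ε(w_1)}) ⋯ (T_{i(z_n)}^* T_{i(w_n)}^{ε(w_n)})`
of the blocks, taken in the increasing order of the right legs `w_1 < ⋯ < w_n`
(the list `(List.finRange (2n)).filter (p · < ·)` enumerates the right legs in increasing
order). -/
theorem stmt6 {A : Type*} [Ring A] [Algebra ℂ A] [StarRing A]
    (T T' : ℕ → A) (Q : Eps → Eps → ℕ → ℕ → ℝ) (hC4 : C4 T T' Q)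
    (n : ℕ) (p : Fin (2 * n) → Fin (2 * n)) (f : Fin (2 * n) → Bool)
    (hp : IsPairing p) (hf : IsColoring p f)
    (ε : Fin (2 * n) → Eps) (hε : EpsCompat ε p f)
    (i : Fin (2 * n) → ℕ) (hker : kerPair i p) :
    prodT T T' ε i
      = ((Xi Q p f i : ℝ) : ℂ) •
        ((((List.finRange (2 * n)).filter fun k => decide (p k < k)).map
            fun k => star (T (i (p k))) * Teps T T' (ε k) (i k)).prod) := by
  have hpp : ∀ k, p (p k) = k := fun k => (hp k).1
  have hpne : ∀ k, p k ≠ k := fun k => (hp k).2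
  set x : Fin (2 * n) → A := fun k => Teps T T' (ε k) (i k) with hx
  set q : Fin (2 * n) → Fin (2 * n) → ℂ :=
    fun a b => ((Q (ε a) (ε b) (i a) (i b) : ℝ) : ℂ) with hq
  set key : Fin (2 * n) → ℕ :=
    fun k => 2 * max (k : ℕ) (p k : ℕ) + (if k < p k then 0 else 1) with hkey
  -- key values
  have hkeyl : ∀ k, k < p k → key k = 2 * (p k : ℕ) := by
    intro k h
    have h' : (k : ℕ) < (p k : ℕ) := Fin.lt_def.mp h
    simp [hkey, Nat.max_eq_right h'.le, h]
  have hkeyr : ∀ k, p k < k → key k = 2 * (k : ℕ) + 1 := by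
    intro k h
    have h' : (p k : ℕ) < (k : ℕ) := Fin.lt_def.mp h
    simp [hkey, Nat.max_eq_left h'.le, asymm h]
  have keyinj : Function.Injective key := by
    intro a b hab
    rcases (hpne a).lt_or_gt with ha | ha <;> rcases (hpne b).lt_or_gt with hb | hb
    · rw [hkeyr a ha, hkeyr b hb] at hab
      exact Fin.val_injective (by omega)
    · rw [hkeyr a ha, hkeyl b hb] at hab; omega
    · rw [hkeyl a ha, hkeyr b hb] at hab; omega
    · rw [hkeyl a ha, hkeyl b hb] at hab
      have h1 : p a = p b := Fin.val_injective (by omega)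
      have h2 := congrArg p h1
      rwa [hpp, hpp] at h2
  -- the right legs and the target list M
  set rights : List (Fin (2 * n)) :=
    (List.finRange (2 * n)).filter fun k => decide (p k < k) with hrights
  have hmemrights : ∀ k, k ∈ rights ↔ p k < k := by
    intro k; simp [hrights, List.mem_filter]
  have hrightspw : rights.Pairwise (· < ·) :=
    (List.pairwise_lt_finRange _).sublist List.filter_sublist
  set M : List (Fin (2 * n)) := rights.flatMap fun k => [p k, k] with hM
  have hMmem : ∀ u, u ∈ M := by
    intro u
    rw [hM, List.mem_flatMap]
    rcases (hpne u).lt_or_gt with h | h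
    · exact ⟨u, (hmemrights u).mpr h, by simp⟩
    · refine ⟨p u, (hmemrights (p u)).mpr (by rw [hpp]; exact h), ?_⟩
      simp [hpp]
  have hMnodup : M.Nodup := by
    rw [hM, List.nodup_flatMap]
    constructor
    · intro k _; simp [hpne k]
    · refine hrightspw.imp_of_mem ?_
      intro k₁ k₂ h₁ h₂ hlt
      have hk₁ : p k₁ < k₁ := (hmemrights k₁).mp h₁
      have hk₂ : p k₂ < k₂ := (hmemrights k₂).mp h₂
      intro u hu₁ hu₂
      simp only [List.mem_cons, List.mem_singleton, List.not_mem_nil, or_false] at hu₁ hu₂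
      rcases hu₁ with h1 | h1 <;> rcases hu₂ with h2 | h2
      · have h3 : p k₁ = p k₂ := h1 ▸ h2
        have h4 := congrArg p h3; rw [hpp, hpp] at h4
        exact absurd (h4 ▸ hlt) (lt_irrefl _)
      · have h3 : p k₁ = k₂ := h1 ▸ h2
        rw [h3] at hk₁; exact absurd (hlt.trans hk₁) (lt_irrefl _)
      · have h3 : k₁ = p k₂ := h1 ▸ h2
        have h4 := congrArg p h3; rw [hpp] at h4
        rw [h4] at hk₁; exact absurd (hlt.trans hk₁) (lt_irrefl _)
      · have h3 : k₁ = k₂ := h1 ▸ h2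
        exact absurd (h3 ▸ hlt) (lt_irrefl _)
  have hMperm : M.Perm (List.finRange (2 * n)) :=
    List.perm_of_nodup_nodup_toFinset_eq hMnodup (List.nodup_finRange _)
      (by ext u; simp [hMmem u])
  have hMsorted : M.Pairwise (fun u v => key u ≤ key v) := by
    rw [hM]
    refine List.pairwise_flatMap.mpr ⟨?_, ?_⟩
    · intro k hk
      have hk' : p k < k := (hmemrights k).mp hk
      have h1 : key (p k) = 2 * (k : ℕ) := by
        have := hkeyl (p k) (by rw [hpp]; exact hk')
        rwa [hpp] at this
      have h2 := hkeyr k hk'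
      refine List.pairwise_cons.mpr ⟨?_, List.pairwise_singleton _ _⟩
      rintro y hy
      rw [List.mem_singleton] at hy
      subst hy
      omega
    · refine hrightspw.imp_of_mem ?_
      intro k₁ k₂ h₁ h₂ hlt y₁ hy₁ y₂ hy₂
      have hk₁ : p k₁ < k₁ := (hmemrights k₁).mp h₁
      have hk₂ : p k₂ < k₂ := (hmemrights k₂).mp h₂
      have e1 : key (p k₁) = 2 * (k₁ : ℕ) := by
        have := hkeyl (p k₁) (by rw [hpp]; exact hk₁); rwa [hpp] at this
      have e2 := hkeyr k₁ hk₁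
      have e3 : key (p k₂) = 2 * (k₂ : ℕ) := by
        have := hkeyl (p k₂) (by rw [hpp]; exact hk₂); rwa [hpp] at this
      have e4 := hkeyr k₂ hk₂
      have hlt' : (k₁ : ℕ) < (k₂ : ℕ) := Fin.lt_def.mp hlt
      simp only [List.mem_cons, List.mem_singleton, List.not_mem_nil, or_false] at hy₁ hy₂
      rcases hy₁ with rfl | rfl <;> rcases hy₂ with rfl | rfl <;> omega
  -- identification of the insertion sort with M
  haveI instTot : IsTotal (Fin (2 * n)) (fun u v => key u ≤ key v) :=
    ⟨fun u v => le_total _ _⟩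
  haveI instTrans : IsTrans (Fin (2 * n)) (fun u v => key u ≤ key v) :=
    ⟨fun u v w h1 h2 => h1.trans h2⟩
  haveI instAnti : IsAntisymm (Fin (2 * n)) (fun u v => key u ≤ key v) :=
    ⟨fun u v h1 h2 => keyinj (le_antisymm h1 h2)⟩
  have hsortM : (List.finRange (2 * n)).insertionSort (fun u v => key u ≤ key v) = M :=
    List.Perm.eq_of_pairwise' (List.pairwise_insertionSort _ _) hMsorted
      ((List.perm_insertionSort _ _).trans hMperm.symm)
  -- the commutation hypothesis in pairwise form
  have hpw : (List.finRange (2 * n)).Pairwise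
      (fun u v => key v < key u → x u * x v = q u v • (x v * x u)) := by
    refine (List.pairwise_lt_finRange _).imp ?_
    intro a b hab hlt
    have hne : i a ≠ i b := by
      intro hi
      rcases (hker a b).mp hi with h | h
      · exact absurd (h ▸ hab) (lt_irrefl _)
      · have ha : a < p a := h ▸ hab
        have ea := hkeyl a ha
        have eb : key b = 2 * (p a : ℕ) + 1 := by
          rw [← h]; exact hkeyr (p a) (by rw [hpp]; exact ha)
        omega
    simp only [hx, hq]
    exact hC4 (i a) (i b) hne (ε a) (ε b)
  have hmain := sort_step x q key (List.finRange (2 * n)) hpw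
  -- product over M is the product of the block pairs
  have hMprod : (M.map x).prod =
      (rights.map fun k => star (T (i (p k))) * Teps T T' (ε k) (i k)).prod := by
    rw [hM, List.map_flatMap, List.flatMap_def, List.prod_flatten, List.map_map]
    congr 1
    refine List.map_congr_left ?_
    intro k hk
    have hk' : p k < k := (hmemrights k).mp hk
    have hstar : ε (p k) = Eps.star := (hε (p k) (by rw [hpp]; exact hk')).1
    simp only [Function.comp, List.map_cons, List.map_nil, List.prod_cons, List.prod_nil,
      mul_one, hx, hstar, Teps]
  -- characterizations of key-inversions
  have U1 : ∀ a b : Fin (2 * n), p b < b →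
      ((a < b ∧ key b < key a) ↔ (a < p a ∧ a < b ∧ b < p a)) := by
    intro a b hb
    have hkb := hkeyr b hb
    constructor
    · rintro ⟨hab, hk⟩
      rcases (hpne a).lt_or_gt with ha | ha
      · exfalso
        rw [hkeyr a ha, hkb] at hk
        have := Fin.lt_def.mp hab; omega
      · refine ⟨ha, hab, ?_⟩
        rw [hkeyl a ha, hkb] at hk
        exact Fin.lt_def.mpr (by omega)
    · rintro ⟨ha, hab, hba⟩
      refine ⟨hab, ?_⟩
      rw [hkeyl a ha, hkb]
      have := Fin.lt_def.mp hba; omega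
  have U2 : ∀ a b : Fin (2 * n), b < p b →
      ((a < b ∧ key b < key a) ↔ (a < p a ∧ a < b ∧ p b < p a)) := by
    intro a b hb
    have hkb := hkeyl b hb
    constructor
    · rintro ⟨hab, hk⟩
      rcases (hpne a).lt_or_gt with ha | ha
      · exfalso
        rw [hkeyr a ha, hkb] at hk
        have h1 := Fin.lt_def.mp hab
        have h2 := Fin.lt_def.mp hb
        omega
      · refine ⟨ha, hab, ?_⟩
        rw [hkeyl a ha, hkb] at hk
        exact Fin.lt_def.mpr (by omega)
    · rintro ⟨ha, hab, hba⟩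
      refine ⟨hab, ?_⟩
      rw [hkeyl a ha, hkb]
      have := Fin.lt_def.mp hba; omega
  -- pointwise splitting of the inversion coefficient into the three geometric types
  have hsplitpt : ∀ a b : Fin (2 * n),
      (if a < b ∧ key b < key a then q a b else 1) =
      (if (a < b ∧ key b < key a) ∧ p b < b ∧ p b < a then q a b else 1) *
      ((if (a < b ∧ key b < key a) ∧ b < p b then q a b else 1) *
       (if (a < b ∧ key b < key a) ∧ p b < b ∧ a < p b then q a b else 1)) := by
    intro a b
    by_cases hc : a < b ∧ key b < key a
    · rcases (hpne b).lt_or_gt with hb | hb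
      · have hK := (U1 a b hb).mp hc
        have hba : p b ≠ a := by
          intro h
          have h' := congrArg p h; rw [hpp] at h'
          exact absurd (h' ▸ hK.2.2) (lt_irrefl b)
        rcases hba.lt_or_gt with h1 | h1
        · rw [if_pos hc,
            if_pos (⟨hc, hb, h1⟩ : (a < b ∧ key b < key a) ∧ p b < b ∧ p b < a),
            if_neg (fun h : (a < b ∧ key b < key a) ∧ b < p b => absurd h.2 (asymm hb)),
            if_neg (fun h : (a < b ∧ key b < key a) ∧ p b < b ∧ a < p b =>
              absurd h.2.2 (asymm h1)), mul_one, mul_one]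
        · rw [if_pos hc,
            if_neg (fun h : (a < b ∧ key b < key a) ∧ p b < b ∧ p b < a =>
              absurd h.2.2 (asymm h1)),
            if_neg (fun h : (a < b ∧ key b < key a) ∧ b < p b => absurd h.2 (asymm hb)),
            if_pos (⟨hc, hb, h1⟩ : (a < b ∧ key b < key a) ∧ p b < b ∧ a < p b),
            one_mul, one_mul]
      · rw [if_pos hc,
          if_pos (⟨hc, hb⟩ : (a < b ∧ key b < key a) ∧ b < p b),
          if_neg (fun h : (a < b ∧ key b < key a) ∧ p b < b ∧ p b < a =>
            absurd h.2.1 (asymm hb)),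
          if_neg (fun h : (a < b ∧ key b < key a) ∧ p b < b ∧ a < p b =>
            absurd h.2.1 (asymm hb)), one_mul, mul_one]
    · rw [if_neg hc, if_neg (fun h => hc h.1), if_neg (fun h => hc h.1),
        if_neg (fun h => hc h.1), one_mul, one_mul]
  -- the three double products
  have hI1 : (∏ a : Fin (2 * n), ∏ b : Fin (2 * n),
        if (a < b ∧ key b < key a) ∧ p b < b ∧ p b < a then q a b else 1)
      = ∏ a : Fin (2 * n), ∏ b : Fin (2 * n),
        if a < p a ∧ b < p b ∧ a < b ∧ b < p a ∧ p a < p b then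
          ((Q Eps.star (if f a then Eps.one else Eps.prime) (i b) (i (p a)) : ℝ) : ℂ)
        else 1 := by
    have hpt : ∀ a b : Fin (2 * n),
        (if (b < p a ∧ key (p a) < key b) ∧ p (p a) < p a ∧ p (p a) < b
          then q b (p a) else 1)
        = (if a < p a ∧ b < p b ∧ a < b ∧ b < p a ∧ p a < p b then
            ((Q Eps.star (if f a then Eps.one else Eps.prime) (i b) (i (p a)) : ℝ) : ℂ)
          else 1) := by
      intro a b
      by_cases hR : a < p a ∧ b < p b ∧ a < b ∧ b < p a ∧ p a < p b
      · obtain ⟨h1, h2, h3, h4, h5⟩ := hR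
        have hpa : p (p a) < p a := by rw [hpp]; exact h1
        have hub : b < p a ∧ key (p a) < key b := by
          exact (U1 b (p a) hpa).mpr ⟨h2, h4, h5⟩
        have hmem3 : p (p a) < b := by rw [hpp]; exact h3
        rw [if_pos (⟨hub, hpa, hmem3⟩ :
            (b < p a ∧ key (p a) < key b) ∧ p (p a) < p a ∧ p (p a) < b),
          if_pos (⟨h1, h2, h3, h4, h5⟩ :
            a < p a ∧ b < p b ∧ a < b ∧ b < p a ∧ p a < p b)]
        simp only [hq]
        rw [(hε b h2).1, (hε a h1).2]
      · have hng : ¬ ((b < p a ∧ key (p a) < key b) ∧ p (p a) < p a ∧ p (p a) < b) := by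
          rintro ⟨hub, hpa, hab⟩
          rw [hpp] at hab
          have h1 : a < p a := by rw [hpp] at hpa; exact hpa
          obtain ⟨h2, h4, h5⟩ := (U1 b (p a) (by rw [hpp]; exact h1)).mp hub
          exact hR ⟨h1, h2, hab, h4, h5⟩
        rw [if_neg hng, if_neg hR]
    calc (∏ a : Fin (2 * n), ∏ b : Fin (2 * n),
          if (a < b ∧ key b < key a) ∧ p b < b ∧ p b < a then q a b else 1)
        = ∏ z : Fin (2 * n) × Fin (2 * n),
            (if (z.1 < z.2 ∧ key z.2 < key z.1) ∧ p z.2 < z.2 ∧ p z.2 < z.1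
              then q z.1 z.2 else 1) :=
          (Fintype.prod_prod_type (fun z : Fin (2 * n) × Fin (2 * n) =>
            if (z.1 < z.2 ∧ key z.2 < key z.1) ∧ p z.2 < z.2 ∧ p z.2 < z.1
              then q z.1 z.2 else 1)).symm
      _ = ∏ z : Fin (2 * n) × Fin (2 * n),
            (if z.1 < p z.1 ∧ z.2 < p z.2 ∧ z.1 < z.2 ∧ z.2 < p z.1 ∧ p z.1 < p z.2 then
              ((Q Eps.star (if f z.1 then Eps.one else Eps.prime) (i z.2) (i (p z.1)) : ℝ) : ℂ)
            else 1) := by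
          refine (Fintype.prod_equiv
            ((Equiv.prodComm _ _).trans
              ((Equiv.refl (Fin (2 * n))).prodCongr (Function.Involutive.toPerm p hpp)))
            _ _ ?_).symm
          intro z
          exact (hpt z.1 z.2).symm
      _ = ∏ a : Fin (2 * n), ∏ b : Fin (2 * n),
            if a < p a ∧ b < p b ∧ a < b ∧ b < p a ∧ p a < p b then
              ((Q Eps.star (if f a then Eps.one else Eps.prime) (i b) (i (p a)) : ℝ) : ℂ)
            else 1 :=
          Fintype.prod_prod_type (fun z : Fin (2 * n) × Fin (2 * n) =>
            if z.1 < p z.1 ∧ z.2 < p z.2 ∧ z.1 < z.2 ∧ z.2 < p z.1 ∧ p z.1 < p z.2 then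
              ((Q Eps.star (if f z.1 then Eps.one else Eps.prime) (i z.2) (i (p z.1)) : ℝ) : ℂ)
            else 1)
  have hI2 : (∏ a : Fin (2 * n), ∏ b : Fin (2 * n),
        if (a < b ∧ key b < key a) ∧ b < p b then q a b else 1)
      = ∏ a : Fin (2 * n), ∏ b : Fin (2 * n),
        if a < p a ∧ b < p b ∧ a < b ∧ p b < p a then
          ((Q Eps.star Eps.star (i a) (i b) : ℝ) : ℂ) else 1 := by
    refine Finset.prod_congr rfl fun a _ => Finset.prod_congr rfl fun b _ => ?_
    by_cases hR : a < p a ∧ b < p b ∧ a < b ∧ p b < p a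
    · obtain ⟨h1, h2, h3, h4⟩ := hR
      rw [if_pos (⟨(U2 a b h2).mpr ⟨h1, h3, h4⟩, h2⟩ :
          (a < b ∧ key b < key a) ∧ b < p b),
        if_pos (⟨h1, h2, h3, h4⟩ : a < p a ∧ b < p b ∧ a < b ∧ p b < p a)]
      simp only [hq]
      rw [(hε a h1).1, (hε b h2).1]
    · have hng : ¬ ((a < b ∧ key b < key a) ∧ b < p b) := by
        rintro ⟨hub, hb⟩
        obtain ⟨h1, h3, h4⟩ := (U2 a b hb).mp hub
        exact hR ⟨h1, hb, h3, h4⟩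
      rw [if_neg hng, if_neg hR]
  have hI3 : (∏ a : Fin (2 * n), ∏ b : Fin (2 * n),
        if (a < b ∧ key b < key a) ∧ p b < b ∧ a < p b then q a b else 1)
      = ∏ a : Fin (2 * n), ∏ b : Fin (2 * n),
        if a < p a ∧ b < p b ∧ a < b ∧ p b < p a then
          ((Q Eps.star (if f b then Eps.one else Eps.prime) (i a) (i (p b)) : ℝ) : ℂ)
        else 1 := by
    have hpt : ∀ a b : Fin (2 * n),
        (if (a < p b ∧ key (p b) < key a) ∧ p (p b) < p b ∧ a < p (p b)
          then q a (p b) else 1)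
        = (if a < p a ∧ b < p b ∧ a < b ∧ p b < p a then
            ((Q Eps.star (if f b then Eps.one else Eps.prime) (i a) (i (p b)) : ℝ) : ℂ)
          else 1) := by
      intro a b
      by_cases hR : a < p a ∧ b < p b ∧ a < b ∧ p b < p a
      · obtain ⟨h1, h2, h3, h4⟩ := hR
        have hpb : p (p b) < p b := by rw [hpp]; exact h2
        have hub : a < p b ∧ key (p b) < key a :=
          (U1 a (p b) hpb).mpr ⟨h1, h3.trans h2, h4⟩
        have hmem3 : a < p (p b) := by rw [hpp]; exact h3
        rw [if_pos (⟨hub, hpb, hmem3⟩ :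
            (a < p b ∧ key (p b) < key a) ∧ p (p b) < p b ∧ a < p (p b)),
          if_pos (⟨h1, h2, h3, h4⟩ : a < p a ∧ b < p b ∧ a < b ∧ p b < p a)]
        simp only [hq]
        rw [(hε a h1).1, (hε b h2).2]
      · have hng : ¬ ((a < p b ∧ key (p b) < key a) ∧ p (p b) < p b ∧ a < p (p b)) := by
          rintro ⟨hub, hpb, hab⟩
          rw [hpp] at hab
          have h2 : b < p b := by rw [hpp] at hpb; exact hpb
          obtain ⟨h1, h3, h4⟩ := (U1 a (p b) (by rw [hpp]; exact h2)).mp hub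
          exact hR ⟨h1, h2, hab, h4⟩
        rw [if_neg hng, if_neg hR]
    calc (∏ a : Fin (2 * n), ∏ b : Fin (2 * n),
          if (a < b ∧ key b < key a) ∧ p b < b ∧ a < p b then q a b else 1)
        = ∏ z : Fin (2 * n) × Fin (2 * n),
            (if (z.1 < z.2 ∧ key z.2 < key z.1) ∧ p z.2 < z.2 ∧ z.1 < p z.2
              then q z.1 z.2 else 1) :=
          (Fintype.prod_prod_type (fun z : Fin (2 * n) × Fin (2 * n) =>
            if (z.1 < z.2 ∧ key z.2 < key z.1) ∧ p z.2 < z.2 ∧ z.1 < p z.2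
              then q z.1 z.2 else 1)).symm
      _ = ∏ z : Fin (2 * n) × Fin (2 * n),
            (if z.1 < p z.1 ∧ z.2 < p z.2 ∧ z.1 < z.2 ∧ p z.2 < p z.1 then
              ((Q Eps.star (if f z.2 then Eps.one else Eps.prime) (i z.1) (i (p z.2)) : ℝ) : ℂ)
            else 1) := by
          refine (Fintype.prod_equiv
            ((Equiv.refl (Fin (2 * n))).prodCongr (Function.Involutive.toPerm p hpp))
            _ _ ?_).symm
          intro z
          exact (hpt z.1 z.2).symm
      _ = ∏ a : Fin (2 * n), ∏ b : Fin (2 * n),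
            if a < p a ∧ b < p b ∧ a < b ∧ p b < p a then
              ((Q Eps.star (if f b then Eps.one else Eps.prime) (i a) (i (p b)) : ℝ) : ℂ)
            else 1 :=
          Fintype.prod_prod_type (fun z : Fin (2 * n) × Fin (2 * n) =>
            if z.1 < p z.1 ∧ z.2 < p z.2 ∧ z.1 < z.2 ∧ p z.2 < p z.1 then
              ((Q Eps.star (if f z.2 then Eps.one else Eps.prime) (i z.1) (i (p z.2)) : ℝ) : ℂ)
            else 1)
  -- the cast of Xi splits into the three double products
  have hXiC : ((Xi Q p f i : ℝ) : ℂ) =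
      (∏ a : Fin (2 * n), ∏ b : Fin (2 * n),
        if a < p a ∧ b < p b ∧ a < b ∧ b < p a ∧ p a < p b then
          ((Q Eps.star (if f a then Eps.one else Eps.prime) (i b) (i (p a)) : ℝ) : ℂ)
        else 1) *
      ((∏ a : Fin (2 * n), ∏ b : Fin (2 * n),
        if a < p a ∧ b < p b ∧ a < b ∧ p b < p a then
          ((Q Eps.star Eps.star (i a) (i b) : ℝ) : ℂ) else 1) *
       (∏ a : Fin (2 * n), ∏ b : Fin (2 * n),
        if a < p a ∧ b < p b ∧ a < b ∧ p b < p a then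
          ((Q Eps.star (if f b then Eps.one else Eps.prime) (i a) (i (p b)) : ℝ) : ℂ)
        else 1)) := by
    rw [Xi]
    rw [Complex.ofReal_mul]
    congr 1
    · rw [Complex.ofReal_prod]
      refine Finset.prod_congr rfl fun a _ => ?_
      rw [Complex.ofReal_prod]
      refine Finset.prod_congr rfl fun b _ => ?_
      rw [apply_ite (fun r : ℝ => (r : ℂ)), Complex.ofReal_one]
    · rw [Complex.ofReal_prod, ← Finset.prod_mul_distrib]
      refine Finset.prod_congr rfl fun a _ => ?_
      rw [Complex.ofReal_prod, ← Finset.prod_mul_distrib]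
      refine Finset.prod_congr rfl fun b _ => ?_
      by_cases h : a < p a ∧ b < p b ∧ a < b ∧ p b < p a
      · rw [if_pos h, if_pos h, if_pos h, Complex.ofReal_mul]
      · rw [if_neg h, if_neg h, if_neg h, Complex.ofReal_one, mul_one]
  -- the coefficient identity
  have hcoef : cLcoef q key (List.finRange (2 * n)) = ((Xi Q p f i : ℝ) : ℂ) := by
    calc cLcoef q key (List.finRange (2 * n))
        = ∏ a : Fin (2 * n), ∏ b : Fin (2 * n),
            if a ∈ List.finRange (2 * n) ∧ b ∈ List.finRange (2 * n) ∧
              a < b ∧ key b < key a then q a b else 1 :=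
          cLcoef_eq_prod q key _ (List.pairwise_lt_finRange _)
      _ = ∏ a : Fin (2 * n), ∏ b : Fin (2 * n),
            if a < b ∧ key b < key a then q a b else 1 := by
          refine Finset.prod_congr rfl fun a _ => Finset.prod_congr rfl fun b _ => ?_
          refine if_congr ?_ rfl rfl
          simp [List.mem_finRange]
      _ = ∏ a : Fin (2 * n), ∏ b : Fin (2 * n),
            ((if (a < b ∧ key b < key a) ∧ p b < b ∧ p b < a then q a b else 1) *
             ((if (a < b ∧ key b < key a) ∧ b < p b then q a b else 1) *
              (if (a < b ∧ key b < key a) ∧ p b < b ∧ a < p b then q a b else 1))) :=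
          Finset.prod_congr rfl fun a _ => Finset.prod_congr rfl fun b _ => hsplitpt a b
      _ = (∏ a : Fin (2 * n), ∏ b : Fin (2 * n),
            if (a < b ∧ key b < key a) ∧ p b < b ∧ p b < a then q a b else 1) *
          ((∏ a : Fin (2 * n), ∏ b : Fin (2 * n),
            if (a < b ∧ key b < key a) ∧ b < p b then q a b else 1) *
           (∏ a : Fin (2 * n), ∏ b : Fin (2 * n),
            if (a < b ∧ key b < key a) ∧ p b < b ∧ a < p b then q a b else 1)) := by
          simp only [Finset.prod_mul_distrib]
      _ = ((Xi Q p f i : ℝ) : ℂ) := by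
          rw [hI1, hI2, hI3, ← hXiC]
  -- conclusion
  calc prodT T T' ε i
      = ((List.finRange (2 * n)).map x).prod := by
        simp only [prodT, List.ofFn_eq_map, hx]
    _ = cLcoef q key (List.finRange (2 * n)) •
        (((List.finRange (2 * n)).insertionSort (fun u v => key u ≤ key v)).map x).prod :=
        hmain
    _ = ((Xi Q p f i : ℝ) : ℂ) •
        ((rights.map fun k => star (T (i (p k))) * Teps T T' (ε k) (i k)).prod) := by
        rw [hsortM, hMprod, hcoef]
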